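/- (Nash-Williams partition theorem, r colours) Let 𝓕 be a thin family of finite subsets of ℕ and r > 0. For every f : 𝓕 → {0,…,r−1} and every infinite M ⊆ ℕ, there exist an infinite N ⊆ M and i < r such that for all j < r with j ≠ i, no element of 𝓕 coloured j is a subset of N. -/

import Mathlib

/-- `S` is an initial segment of `T` (finite sets identified with increasing enumerations). -/
def InitSeg (S T : Finset ℕ) : Prop :=
  ∃ S2 : Finset ℕ, T = S ∪ S2 ∧ ∀ a ∈ S, ∀ b ∈ S2, a < b

/-- A family of finite sets is thin: no member is a proper initial segment of another. -/
def ThinFam (F : Set (Finset ℕ)) : Prop :=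
  ∀ S ∈ F, ∀ T ∈ F, InitSeg S T → S = T


/-- `y` is a (finite) initial segment of the set `Z`. -/
def NWSeg (y : Finset ℕ) (Z : Set ℕ) : Prop :=
  ↑y ⊆ Z ∧ ∀ b ∈ Z, b ∉ y → ∀ a ∈ y, a < b

/-- `X` accepts `s` (w.r.t. family `A`): every infinite subset of `X` lying above `s`
has an initial segment `y` with `s ∪ y ∈ A`. -/
def NWAcc (A : Set (Finset ℕ)) (s : Finset ℕ) (X : Set ℕ) : Prop :=
  ∀ Z ⊆ X, Z.Infinite → (∀ b ∈ Z, ∀ a ∈ s, a < b) → ∃ y, NWSeg y Z ∧ s ∪ y ∈ A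

/-- `X` rejects `s`: no infinite subset of `X` accepts `s`. -/
def NWRej (A : Set (Finset ℕ)) (s : Finset ℕ) (X : Set ℕ) : Prop :=
  ∀ Y ⊆ X, Y.Infinite → ¬ NWAcc A s Y

lemma nwacc_mono {A s} {X Y : Set ℕ} (h : NWAcc A s X) (hYX : Y ⊆ X) : NWAcc A s Y :=
  fun Z hZ => h Z (hZ.trans hYX)

lemma nwrej_mono {A s} {X Y : Set ℕ} (h : NWRej A s X) (hYX : Y ⊆ X) : NWRej A s Y :=
  fun Z hZ => h Z (hZ.trans hYX)

lemma nwacc_of_mem {A : Set (Finset ℕ)} {s : Finset ℕ} (hs : s ∈ A) (X : Set ℕ) :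
    NWAcc A s X := by
  intro Z _ _ _
  exact ⟨∅, ⟨by simp, by simp⟩, by simpa⟩

lemma nwdecide (A : Set (Finset ℕ)) (s : Finset ℕ) {X : Set ℕ} (hX : X.Infinite) :
    ∃ Y ⊆ X, Y.Infinite ∧ (NWAcc A s Y ∨ NWRej A s Y) := by
  by_cases h : ∃ Y ⊆ X, Y.Infinite ∧ NWAcc A s Y
  · obtain ⟨Y, h1, h2, h3⟩ := h; exact ⟨Y, h1, h2, Or.inl h3⟩
  · exact ⟨X, subset_rfl, hX, Or.inr fun Y hY hYi hacc => h ⟨Y, hY, hYi, hacc⟩⟩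

lemma nwdecide_many (A : Set (Finset ℕ)) (𝒮 : Finset (Finset ℕ)) {X : Set ℕ}
    (hX : X.Infinite) :
    ∃ Y ⊆ X, Y.Infinite ∧ ∀ s ∈ 𝒮, NWAcc A s Y ∨ NWRej A s Y := by
  induction 𝒮 using Finset.induction generalizing X with
  | empty => exact ⟨X, subset_rfl, hX, by simp⟩
  | @insert a t hnotmem ih =>
    obtain ⟨Y, hYX, hYi, hY⟩ := ih hX
    obtain ⟨W, hWY, hWi, hW⟩ := nwdecide A a hYi
    refine ⟨W, hWY.trans hYX, hWi, ?_⟩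
    intro s hs
    rcases Finset.mem_insert.mp hs with rfl | hs
    · exact hW
    · rcases hY s hs with h | h
      · exact Or.inl (nwacc_mono h hWY)
      · exact Or.inr (nwrej_mono h hWY)

lemma inter_Ioi_infinite {Z : Set ℕ} (hZ : Z.Infinite) (n : ℕ) :
    (Z ∩ Set.Ioi n).Infinite := by
  have : Z \ Set.Iic n = Z ∩ Set.Ioi n := by
    ext x; simp [Set.mem_Ioi, Set.mem_Iic, not_le]
  simpa [this] using hZ.diff (Set.finite_Iic n)

lemma nwacc_diag {A : Set (Finset ℕ)} {s : Finset ℕ} {Y : Set ℕ}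
    (h : ∀ n ∈ Y, NWAcc A (insert n s) (Y ∩ Set.Ioi n)) : NWAcc A s Y := by
  intro Z hZY hZinf hZgt
  have hZne : Z.Nonempty := hZinf.nonempty
  set n := sInf Z with hn
  have hnZ : n ∈ Z := Nat.sInf_mem hZne
  have hnY : n ∈ Y := hZY hnZ
  have hnmin : ∀ b ∈ Z, n ≤ b := fun b hb => Nat.sInf_le hb
  set Z' := Z ∩ Set.Ioi n with hZ'
  have hZ'sub : Z' ⊆ Y ∩ Set.Ioi n := fun x hx => ⟨hZY hx.1, hx.2⟩
  have hZ'inf : Z'.Infinite := inter_Ioi_infinite hZinf n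
  have hZ'gt : ∀ b ∈ Z', ∀ a ∈ insert n s, a < b := by
    intro b hb a ha
    rcases Finset.mem_insert.mp ha with rfl | ha
    · exact hb.2
    · exact hZgt b hb.1 a ha
  obtain ⟨y, ⟨hy1, hy2⟩, hyA⟩ := h n hnY Z' hZ'sub hZ'inf hZ'gt
  refine ⟨insert n y, ⟨?_, ?_⟩, ?_⟩
  · intro x hx
    rcases Finset.mem_insert.mp (by exact_mod_cast hx) with rfl | hx
    · exact hnZ
    · exact (hy1 (by exact_mod_cast hx)).1
  · intro b hb hbny a ha
    have hbn : b ≠ n := fun hbn => hbny (by simp [hbn])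
    have hbZ' : b ∈ Z' := ⟨hb, lt_of_le_of_ne (hnmin b hb) (Ne.symm hbn)⟩
    rcases Finset.mem_insert.mp ha with rfl | ha
    · exact hbZ'.2
    · exact hy2 b hbZ' (fun hby => hbny (Finset.mem_insert_of_mem hby)) a ha
  · have : s ∪ insert n y = insert n s ∪ y := by
      ext x; simp [Finset.mem_insert, Finset.mem_union]
    rw [this]; exact hyA

/-- One fusion step: if `X` rejects all subsets of `F`, we can find `n ∈ X` above `F`
and an infinite `X' ⊆ X` above `n` rejecting all subsets of `insert n F`. -/
lemma nwstep {A : Set (Finset ℕ)} {F : Finset ℕ} {X : Set ℕ} (hX : X.Infinite)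
    (hrej : ∀ s ⊆ F, NWRej A s X) :
    ∃ n ∈ X, (∀ a ∈ F, a < n) ∧ ∃ X' ⊆ X ∩ Set.Ioi n, X'.Infinite ∧
      ∀ s ⊆ insert n F, NWRej A s X' := by
  by_contra hcon
  push_neg at hcon
  -- from the negation: in any infinite `Y ⊆ X` we can find a candidate `(n, s, W)`
  -- with `W` accepting `insert n s`.
  have key : ∀ Y ⊆ X, Y.Infinite → ∃ q : ℕ × Finset ℕ × Set ℕ,
      q.1 ∈ Y ∧ (∀ a ∈ F, a < q.1) ∧ q.2.1 ⊆ F ∧ q.2.2 ⊆ Y ∩ Set.Ioi q.1 ∧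
      q.2.2.Infinite ∧ NWAcc A (insert q.1 q.2.1) q.2.2 := by
    intro Y hYX hYi
    set m := F.sup id with hm
    have hY'i : (Y ∩ Set.Ioi m).Infinite := inter_Ioi_infinite hYi m
    set n := sInf (Y ∩ Set.Ioi m) with hn
    have hnmem : n ∈ Y ∩ Set.Ioi m := Nat.sInf_mem hY'i.nonempty
    have hnY : n ∈ Y := hnmem.1
    have hnF : ∀ a ∈ F, a < n := fun a ha =>
      lt_of_le_of_lt (Finset.le_sup (f := id) ha) hnmem.2
    obtain ⟨W, hWsub, hWi, hW⟩ := nwdecide_many A (F.powerset.image (insert n))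
      (inter_Ioi_infinite hYi n)
    by_cases hc : ∃ s ⊆ F, NWAcc A (insert n s) W
    · obtain ⟨s, hsF, hacc⟩ := hc
      exact ⟨⟨n, s, W⟩, hnY, hnF, hsF, hWsub, hWi, hacc⟩
    · push_neg at hc
      exfalso
      have hWX : W ⊆ X ∩ Set.Ioi n := fun x hx =>
        ⟨hYX (hWsub hx).1, (hWsub hx).2⟩
      have hall : ∀ s ⊆ insert n F, NWRej A s W := by
        intro s hs
        by_cases hns : n ∈ s
        · have hse : s.erase n ⊆ F := by
            intro x hx
            rcases Finset.mem_insert.mp (hs (Finset.mem_of_mem_erase hx)) with rfl | h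
            · exact absurd rfl (Finset.ne_of_mem_erase hx)
            · exact h
          have hmem : s ∈ F.powerset.image (insert n) := by
            refine Finset.mem_image.mpr ⟨s.erase n, Finset.mem_powerset.mpr hse, ?_⟩
            exact Finset.insert_erase hns
          rcases hW s hmem with hacc | hrej'
          · have hnc := hc (s.erase n) hse
            rw [Finset.insert_erase hns] at hnc
            exact absurd hacc hnc
          · exact hrej'
        · have hsF : s ⊆ F := fun x hx => by
            rcases Finset.mem_insert.mp (hs hx) with rfl | h
            · exact absurd hx hns
            · exact h
          exact nwrej_mono (hrej s hsF) (fun x hx => (hWX hx).1)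
      obtain ⟨s, hs, hnr⟩ := hcon n (hYX hnY) hnF W hWX hWi
      exact hnr (hall s hs)
  classical
  -- iterate `key` to obtain an infinite sequence of candidates
  set Spec : Set ℕ → ℕ × Finset ℕ × Set ℕ → Prop := fun Y q =>
    q.1 ∈ Y ∧ (∀ a ∈ F, a < q.1) ∧ q.2.1 ⊆ F ∧ q.2.2 ⊆ Y ∩ Set.Ioi q.1 ∧
      q.2.2.Infinite ∧ NWAcc A (insert q.1 q.2.1) q.2.2 with hSpec
  have key' : ∀ Y ⊆ X, Y.Infinite → ∃ q, Spec Y q := key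
  set g : ℕ → ℕ × Finset ℕ × Set ℕ := fun k => Nat.rec
    (Classical.choose (key' X subset_rfl hX))
    (fun _ p => if h : p.2.2 ⊆ X ∧ p.2.2.Infinite
      then Classical.choose (key' p.2.2 h.1 h.2) else p) k with hg
  have hg0 : Spec X (g 0) := Classical.choose_spec (key' X subset_rfl hX)
  have hsub : ∀ k, (g k).2.2 ⊆ X ∧ (g k).2.2.Infinite := by
    intro k
    induction k with
    | zero => exact ⟨fun x hx => (hg0.2.2.2.1 hx).1, hg0.2.2.2.2.1⟩
    | succ k ih =>
      have hs : Spec (g k).2.2 (g (k+1)) := by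
        have : g (k+1) = Classical.choose (key' (g k).2.2 ih.1 ih.2) := by
          simp only [hg, dif_pos ih]
          exact dif_pos ih
        rw [this]; exact Classical.choose_spec (key' (g k).2.2 ih.1 ih.2)
      exact ⟨fun x hx => ih.1 (hs.2.2.2.1 hx).1, hs.2.2.2.2.1⟩
  have hsucc : ∀ k, Spec (g k).2.2 (g (k+1)) := by
    intro k
    have : g (k+1) = Classical.choose (key' (g k).2.2 (hsub k).1 (hsub k).2) := by
      simp only [hg, dif_pos (hsub k)]
      exact dif_pos (hsub k)
    rw [this]; exact Classical.choose_spec (key' (g k).2.2 (hsub k).1 (hsub k).2)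
  set n : ℕ → ℕ := fun k => (g k).1 with hn
  have hnest1 : ∀ k, (g (k+1)).2.2 ⊆ (g k).2.2 :=
    fun k x hx => ((hsucc k).2.2.2.1 hx).1
  have hnIoi : ∀ k, (g k).2.2 ⊆ Set.Ioi (n k) := by
    intro k x hx
    cases k with
    | zero => exact (hg0.2.2.2.1 hx).2
    | succ k => exact ((hsucc k).2.2.2.1 hx).2
  have hmono : StrictMono n := by
    apply strictMono_nat_of_lt_succ
    intro k
    exact hnIoi k ((hsucc k).1)
  have hnest : ∀ k j, k ≤ j → (g j).2.2 ⊆ (g k).2.2 := by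
    intro k j hkj
    induction j with
    | zero => simp_all
    | succ j ih =>
      rcases Nat.lt_or_ge k (j+1) with h | h
      · exact (hnest1 j).trans (ih (Nat.lt_succ_iff.mp h))
      · have : k = j + 1 := le_antisymm hkj h
        subst this; exact subset_rfl
  have hntail : ∀ k j, k < j → n j ∈ (g k).2.2 := by
    intro k j hkj
    cases j with
    | zero => omega
    | succ j => exact hnest k j (Nat.lt_succ_iff.mp hkj) (hsucc j).1
  have hnX : ∀ k, n k ∈ X := by
    intro k
    cases k with
    | zero => exact hg0.1
    | succ k => exact (hsub k).1 (hsucc k).1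
  have hnF' : ∀ k, ∀ a ∈ F, a < n k := by
    intro k
    cases k with
    | zero => exact hg0.2.1
    | succ k => exact (hsucc k).2.1
  have hcol : ∀ k, (g k).2.1 ⊆ F := by
    intro k
    cases k with
    | zero => exact hg0.2.2.1
    | succ k => exact (hsucc k).2.2.1
  have hacc' : ∀ k, NWAcc A (insert (n k) (g k).2.1) (g k).2.2 := by
    intro k
    cases k with
    | zero => exact hg0.2.2.2.2.2
    | succ k => exact (hsucc k).2.2.2.2.2
  -- pigeonhole on the colours `(g k).2.1 ⊆ F`
  have hpig : ∃ s ∈ F.powerset, {k | (g k).2.1 = s}.Infinite := by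
    by_contra hfin
    push_neg at hfin
    have hsubU : (Set.univ : Set ℕ) ⊆ ⋃ s ∈ (F.powerset : Finset (Finset ℕ)), {k | (g k).2.1 = s} := by
      intro k _
      exact Set.mem_biUnion (Finset.mem_powerset.mpr (hcol k)) rfl
    have hfinU : (⋃ s ∈ (F.powerset : Finset (Finset ℕ)), {k | (g k).2.1 = s}).Finite :=
      Set.Finite.biUnion (F.powerset.finite_toSet)
        (fun s hs => (hfin s hs))
    exact Set.infinite_univ (hfinU.subset hsubU)
  obtain ⟨s, hsF, hfib⟩ := hpig
  have hsF' : s ⊆ F := Finset.mem_powerset.mp hsF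
  set Y : Set ℕ := n '' {k | (g k).2.1 = s} with hY
  have hYX' : Y ⊆ X := by rintro x ⟨k, _, rfl⟩; exact hnX k
  have hYi : Y.Infinite := hfib.image (hmono.injective.injOn)
  refine hrej s hsF' Y hYX' hYi ?_
  apply nwacc_diag
  rintro m ⟨k, hk, rfl⟩
  have h1 : NWAcc A (insert (n k) s) (g k).2.2 := by
    have := hacc' k; rwa [hk] at this
  apply nwacc_mono h1
  rintro x ⟨⟨j, hj, rfl⟩, hx2⟩
  have hkj : k < j := hmono.lt_iff_lt.mp hx2
  exact hntail k j hkj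

/-- If `M` rejects `∅`, there is an infinite `N ⊆ M` containing no member of `A`. -/
lemma nwfusion {A : Set (Finset ℕ)} {M : Set ℕ} (hM : M.Infinite)
    (h0 : NWRej A ∅ M) :
    ∃ N ⊆ M, N.Infinite ∧ ∀ t ∈ A, ¬ (↑t : Set ℕ) ⊆ N := by
  classical
  set Spec : Finset ℕ → Set ℕ → ℕ × Finset ℕ × Set ℕ → Prop := fun F X q =>
    q.1 ∈ X ∧ (∀ a ∈ F, a < q.1) ∧ q.2.1 = insert q.1 F ∧
      q.2.2 ⊆ X ∩ Set.Ioi q.1 ∧ q.2.2.Infinite ∧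
      ∀ s ⊆ q.2.1, NWRej A s q.2.2 with hSpec
  have key : ∀ (F : Finset ℕ) (X : Set ℕ), X.Infinite →
      (∀ s ⊆ F, NWRej A s X) → ∃ q, Spec F X q := by
    intro F X hX hrej
    obtain ⟨m, hmX, hmF, X', hX'1, hX'2, hX'3⟩ := nwstep hX hrej
    exact ⟨⟨m, insert m F, X'⟩, hmX, hmF, rfl, hX'1, hX'2, hX'3⟩
  have h0' : ∀ s ⊆ (∅ : Finset ℕ), NWRej A s M := by
    intro s hs
    rw [Finset.subset_empty.mp hs]
    exact h0
  set g : ℕ → ℕ × Finset ℕ × Set ℕ := fun k => Nat.rec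
    (Classical.choose (key ∅ M hM h0'))
    (fun _ p => if h : p.2.2.Infinite ∧ ∀ s ⊆ p.2.1, NWRej A s p.2.2
      then Classical.choose (key p.2.1 p.2.2 h.1 h.2) else p) k with hg
  have hg0 : Spec ∅ M (g 0) := Classical.choose_spec (key ∅ M hM h0')
  have hinv : ∀ k, (g k).2.2.Infinite ∧ ∀ s ⊆ (g k).2.1, NWRej A s (g k).2.2 := by
    intro k
    induction k with
    | zero => exact ⟨hg0.2.2.2.2.1, hg0.2.2.2.2.2⟩
    | succ k ih =>
      have hs : Spec (g k).2.1 (g k).2.2 (g (k+1)) := by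
        have : g (k+1) = Classical.choose (key (g k).2.1 (g k).2.2 ih.1 ih.2) := by
          simp only [hg, dif_pos ih]
          exact dif_pos ih
        rw [this]; exact Classical.choose_spec (key (g k).2.1 (g k).2.2 ih.1 ih.2)
      exact ⟨hs.2.2.2.2.1, hs.2.2.2.2.2⟩
  have hsucc : ∀ k, Spec (g k).2.1 (g k).2.2 (g (k+1)) := by
    intro k
    have : g (k+1) = Classical.choose (key (g k).2.1 (g k).2.2 (hinv k).1 (hinv k).2) := by
      simp only [hg, dif_pos (hinv k)]
      exact dif_pos (hinv k)
    rw [this]; exact Classical.choose_spec (key (g k).2.1 (g k).2.2 (hinv k).1 (hinv k).2)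
  set n : ℕ → ℕ := fun k => (g k).1 with hn
  have hXsubM : ∀ k, (g k).2.2 ⊆ M := by
    intro k
    induction k with
    | zero => exact fun x hx => (hg0.2.2.2.1 hx).1
    | succ k ih => exact fun x hx => ih ((hsucc k).2.2.2.1 hx).1
  have hnM : ∀ k, n k ∈ M := by
    intro k
    cases k with
    | zero => exact hg0.1
    | succ k => exact hXsubM k (hsucc k).1
  have hnIoi : ∀ k, (g k).2.2 ⊆ Set.Ioi (n k) := by
    intro k x hx
    cases k with
    | zero => exact (hg0.2.2.2.1 hx).2
    | succ k => exact ((hsucc k).2.2.2.1 hx).2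
  have hmono : StrictMono n := by
    apply strictMono_nat_of_lt_succ
    intro k
    exact hnIoi k (hsucc k).1
  have hnest1 : ∀ k, (g (k+1)).2.2 ⊆ (g k).2.2 :=
    fun k x hx => ((hsucc k).2.2.2.1 hx).1
  have hnest : ∀ k j, k ≤ j → (g j).2.2 ⊆ (g k).2.2 := by
    intro k j hkj
    induction j with
    | zero => simp_all
    | succ j ih =>
      rcases Nat.lt_or_ge k (j+1) with h | h
      · exact (hnest1 j).trans (ih (Nat.lt_succ_iff.mp h))
      · have : k = j + 1 := le_antisymm hkj h
        subst this; exact subset_rfl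
  have hntail : ∀ k j, k < j → n j ∈ (g k).2.2 := by
    intro k j hkj
    cases j with
    | zero => omega
    | succ j => exact hnest k j (Nat.lt_succ_iff.mp hkj) (hsucc j).1
  have hFk : ∀ k, (g k).2.1 = insert (n k) (if h : k = 0 then ∅ else (g (k-1)).2.1) := by
    intro k
    cases k with
    | zero => simpa using hg0.2.2.1
    | succ k => simpa using (hsucc k).2.2.1
  have hmemF : ∀ j k, j ≤ k → n j ∈ (g k).2.1 := by
    intro j k hjk
    induction k with
    | zero =>
      have : j = 0 := Nat.le_zero.mp hjk
      subst this
      rw [hFk 0]; simp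
    | succ k ih =>
      rw [hFk (k+1)]
      simp only [Nat.succ_ne_zero, dif_neg, Nat.add_sub_cancel]
      rcases Nat.lt_or_ge j (k+1) with h | h
      · exact Finset.mem_insert_of_mem (ih (Nat.lt_succ_iff.mp h))
      · have : j = k + 1 := le_antisymm hjk h
        subst this; exact Finset.mem_insert_self _ _
  refine ⟨Set.range n, ?_, ?_, ?_⟩
  · rintro x ⟨k, rfl⟩; exact hnM k
  · exact Set.infinite_range_of_injective hmono.injective
  · intro t htA htN
    -- find `K` with `t ⊆ (g K).2.1`
    have hidx : ∀ x ∈ t, ∃ k, n k = x := fun x hx => htN hx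
    set idx : ℕ → ℕ := fun x => if h : ∃ k, n k = x then Classical.choose h else 0 with hidx'
    set K := t.sup idx with hK
    have htF : t ⊆ (g K).2.1 := by
      intro x hx
      have h := hidx x hx
      have h1 : n (idx x) = x := by
        simp only [hidx', dif_pos h]
        exact Classical.choose_spec h
      rw [← h1]
      exact hmemF (idx x) K (Finset.le_sup (f := idx) hx)
    have hrejt : NWRej A t (g K).2.2 := (hinv K).2 t htF
    set T : Set ℕ := n '' {j | K < j} with hT
    have hTsub : T ⊆ (g K).2.2 := by
      rintro x ⟨j, hj, rfl⟩; exact hntail K j hj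
    have hTi : T.Infinite := by
      apply Set.Infinite.image hmono.injective.injOn
      exact Set.Ioi_infinite K
    exact hrejt T hTsub hTi (nwacc_of_mem htA T)

/-- Nash–Williams dichotomy for one family. -/
lemma nwdichotomy (A : Set (Finset ℕ)) {M : Set ℕ} (hM : M.Infinite) :
    ∃ N ⊆ M, N.Infinite ∧ (NWAcc A ∅ N ∨ ∀ t ∈ A, ¬ (↑t : Set ℕ) ⊆ N) := by
  by_cases h : ∃ N ⊆ M, N.Infinite ∧ NWAcc A ∅ N
  · obtain ⟨N, h1, h2, h3⟩ := h
    exact ⟨N, h1, h2, Or.inl h3⟩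
  · have h0 : NWRej A ∅ M := fun Y hY hYi hacc => h ⟨Y, hY, hYi, hacc⟩
    obtain ⟨N, h1, h2, h3⟩ := nwfusion hM h0
    exact ⟨N, h1, h2, Or.inr h3⟩

/-- two initial segments of the same set are comparable -/
lemma nwseg_comp {S T : Finset ℕ} {Z : Set ℕ} (hS : NWSeg S Z) (hT : NWSeg T Z) :
    InitSeg S T ∨ InitSeg T S := by
  have hcomp : S ⊆ T ∨ T ⊆ S := by
    by_contra h
    push_neg at h
    obtain ⟨h1, h2⟩ := h
    obtain ⟨a, haS, haT⟩ := Finset.not_subset.mp h1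
    obtain ⟨b, hbT, hbS⟩ := Finset.not_subset.mp h2
    have hab : a < b := hS.2 b (hT.1 hbT) hbS a haS
    have hba : b < a := hT.2 a (hS.1 haS) haT b hbT
    omega
  rcases hcomp with h | h
  · left
    refine ⟨T \ S, (Finset.union_sdiff_of_subset h).symm, ?_⟩
    intro a ha b hb
    exact hS.2 b (hT.1 (Finset.mem_sdiff.mp hb).1) (Finset.mem_sdiff.mp hb).2 a ha
  · right
    refine ⟨S \ T, (Finset.union_sdiff_of_subset h).symm, ?_⟩
    intro a ha b hb
    exact hT.2 b (hS.1 (Finset.mem_sdiff.mp hb).1) (Finset.mem_sdiff.mp hb).2 a ha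

/-- If `N` accepts `∅` w.r.t. `A ⊆ F` with `F` thin, every member of `F` inside `N`
actually lies in `A`. -/
lemma nwelim {F A : Set (Finset ℕ)} (hF : ThinFam F) (hAF : A ⊆ F)
    {N : Set ℕ} (hN : N.Infinite) (hacc : NWAcc A ∅ N)
    {S : Finset ℕ} (hSF : S ∈ F) (hSN : (↑S : Set ℕ) ⊆ N) : S ∈ A := by
  set m := S.sup id with hm
  set Z : Set ℕ := ↑S ∪ (N ∩ Set.Ioi m) with hZ
  have hZN : Z ⊆ N := by
    rintro x (hx | hx)
    · exact hSN hx
    · exact hx.1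
  have hZi : Z.Infinite := (inter_Ioi_infinite hN m).mono Set.subset_union_right
  obtain ⟨y, hySeg, hyA⟩ := hacc Z hZN hZi (by simp)
  rw [Finset.empty_union] at hyA
  have hSSeg : NWSeg S Z := by
    refine ⟨Set.subset_union_left, ?_⟩
    intro b hb hbS a ha
    have hb' : b ∈ N ∩ Set.Ioi m := by
      rcases hb with hb | hb
      · exact absurd (by exact_mod_cast hb) hbS
      · exact hb
    exact lt_of_le_of_lt (Finset.le_sup (f := id) ha) hb'.2
  rcases nwseg_comp hSSeg hySeg with h | h
  · rw [hF S hSF y (hAF hyA) h]; exact hyA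
  · rw [← hF y (hAF hyA) S hSF h]; exact hyA

lemma nw_aux : ∀ r : ℕ, 0 < r → ∀ F : Set (Finset ℕ), ThinFam F →
    ∀ f : Finset ℕ → ℕ, (∀ S ∈ F, f S < r) → ∀ M : Set ℕ, M.Infinite →
    ∃ N ⊆ M, N.Infinite ∧ ∃ i < r, ∀ j < r, j ≠ i →
      ∀ S ∈ F, f S = j → ¬ (S : Set ℕ) ⊆ N := by
  intro r
  induction r with
  | zero => omega
  | succ k ih =>
    intro _ F hF f hf M hM
    rcases Nat.eq_zero_or_pos k with rfl | hk
    · exact ⟨M, subset_rfl, hM, 0, Nat.zero_lt_one, by omega⟩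
    set A : Set (Finset ℕ) := {S ∈ F | f S = k} with hA
    have hAF : A ⊆ F := fun S hS => hS.1
    obtain ⟨N, hNM, hNi, hNd⟩ := nwdichotomy A hM
    rcases hNd with hacc | hrej
    · refine ⟨N, hNM, hNi, k, Nat.lt_succ_self k, ?_⟩
      intro j _ hjk S hSF hfS hSN
      have : S ∈ A := nwelim hF hAF hNi hacc hSF hSN
      exact hjk (hfS ▸ this.2.symm ▸ rfl)
    · set F' : Set (Finset ℕ) := {S ∈ F | f S ≠ k} with hF'
      have hF'thin : ThinFam F' := fun S hS T hT h => hF S hS.1 T hT.1 h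
      have hf' : ∀ S ∈ F', f S < k := by
        intro S hS
        have := hf S hS.1
        have := hS.2
        omega
      obtain ⟨N', hN'N, hN'i, i, hik, hi⟩ := ih hk F' hF'thin f hf' N hNi
      refine ⟨N', hN'N.trans hNM, hN'i, i, Nat.lt_succ_of_lt hik, ?_⟩
      intro j hj hji S hSF hfS hSN
      by_cases hjk : j = k
      · exact hrej S ⟨hSF, hjk ▸ hfS⟩ (hSN.trans hN'N)
      · have hjk' : j < k := by omega
        exact hi j hjk' hji S ⟨hSF, by omega⟩ hfS hSN

/-- Nash-Williams partition theorem (r colours). -/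
theorem nash_williams (F : Set (Finset ℕ)) (hF : ThinFam F) (r : ℕ) (hr : 0 < r)
    (f : Finset ℕ → ℕ) (hf : ∀ S ∈ F, f S < r) (M : Set ℕ) (hM : M.Infinite) :
    ∃ N ⊆ M, N.Infinite ∧ ∃ i < r, ∀ j < r, j ≠ i →
      ∀ S ∈ F, f S = j → ¬ (S : Set ℕ) ⊆ N := by
  exact nw_aux r hr F hF f hf M hM
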